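/- Let X be a Banach space and T a bounded linear operator on X with spectral radius r(T) ≤ 1 and σ(T) ∩ 𝕋 ⊆ {1}. If ‖(λ - T)⁻¹‖ = O(|λ - 1|^{-α}) as λ → 1 with |λ| > 1 for some α ≥ 1, then ‖(e^{iθ} - T)⁻¹‖ = O(|θ|^{-α}) as θ → 0. -/

import Mathlib

open Complex Filter
open scoped NNReal ENNReal

set_option maxHeartbeats 1000000

private lemma aux_sin_lb {x : ℝ} (hx : 0 < x) (hx1 : x ≤ 1) : x / 2 ≤ Real.sin x := by
  have h := Real.sin_gt_sub_cube hx
  nlinarith [pow_le_pow_left₀ hx.le hx1 3, sq_nonneg x, hx.le]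

private lemma aux_abs_sin_lb {x : ℝ} (hx : x ≠ 0) (hx1 : |x| ≤ 1) :
    |x| / 2 ≤ |Real.sin x| := by
  rcases lt_or_gt_of_ne hx with h | h
  · have h1 : |(-x)| ≤ 1 := by rwa [abs_neg]
    have := aux_sin_lb (x := -x) (by linarith) (by rwa [abs_of_pos (by linarith)] at h1)
    rw [Real.sin_neg] at this
    rw [abs_of_neg h]
    calc -x / 2 ≤ -Real.sin x := this
      _ ≤ |Real.sin x| := neg_le_abs _
  · have := aux_sin_lb h (by rwa [abs_of_pos h] at hx1)
    rw [abs_of_pos h]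
    exact this.trans (le_abs_self _)

/-- If `T` has spectral radius at most 1, its peripheral spectrum is contained in `{1}`, and
the resolvent satisfies `‖R(λ,T)‖ = O(|λ-1|^{-α})` as `λ → 1` with `|λ| > 1` for some `α ≥ 1`,
then `‖R(e^{iθ},T)‖ = O(|θ|^{-α})` as `θ → 0`. -/
theorem stmt0 {X : Type*} [NormedAddCommGroup X] [NormedSpace ℂ X] [CompleteSpace X]
    (T : X →L[ℂ] X)
    (hr : spectralRadius ℂ T ≤ 1)
    (hσ : spectrum ℂ T ∩ {z : ℂ | ‖z‖ = 1} ⊆ {1})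
    (α : ℝ) (hα : 1 ≤ α)
    (hres : ∃ C > (0:ℝ), ∃ δ > (0:ℝ), ∀ lam : ℂ, 1 < ‖lam‖ → ‖lam - 1‖ ≤ δ →
      ‖resolvent T lam‖ ≤ C * ‖lam - 1‖ ^ (-α)) :
    ∃ C > (0:ℝ), ∃ δ > (0:ℝ), ∀ θ : ℝ, θ ≠ 0 → |θ| ≤ δ →
      ‖resolvent T (Complex.exp (θ * Complex.I))‖ ≤ C * |θ| ^ (-α) := by
  obtain ⟨C, hC, δ, hδ, hbound⟩ := hres
  -- enlarged constant
  set C₁ : ℝ := max C 1 with hC₁def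
  have hC₁ : (1:ℝ) ≤ C₁ := le_max_right _ _
  set K : ℝ := C₁ * (2:ℝ) ^ α with hKdef
  have h2α : (1:ℝ) ≤ (2:ℝ) ^ α := Real.one_le_rpow one_le_two (by linarith)
  have hK1 : (1:ℝ) ≤ K := by
    calc (1:ℝ) = 1 * 1 := by ring
      _ ≤ C₁ * (2:ℝ) ^ α := by gcongr
  have hKpos : (0:ℝ) < K := by linarith
  refine ⟨2 * K, by linarith, min 1 (δ / 3), lt_min one_pos (by linarith), fun θ hθ hθδ => ?_⟩
  have hθ1 : |θ| ≤ 1 := hθδ.trans (min_le_left _ _)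
  have hθδ3 : |θ| ≤ δ / 3 := hθδ.trans (min_le_right _ _)
  have hθpos : 0 < |θ| := abs_pos.mpr hθ
  have hθα_pos : 0 < |θ| ^ α := Real.rpow_pos_of_pos hθpos α
  have hθnα_pos : 0 < |θ| ^ (-α) := Real.rpow_pos_of_pos hθpos (-α)
  have hθα_le : |θ| ^ α ≤ |θ| := by
    calc |θ| ^ α ≤ |θ| ^ (1:ℝ) :=
          Real.rpow_le_rpow_of_exponent_ge hθpos hθ1 hα
      _ = |θ| := Real.rpow_one _
  -- the radial shift
  set s : ℝ := |θ| ^ α / (2 * K) with hsdef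
  have hs_pos : 0 < s := by positivity
  have hs_le : s ≤ |θ| / 2 := by
    rw [hsdef, div_le_div_iff₀ (by linarith) two_pos]
    calc |θ| ^ α * 2 ≤ |θ| * 2 := by gcongr
      _ ≤ |θ| * (2 * K) := by nlinarith
  set μ : ℂ := Complex.exp (θ * Complex.I) with hμdef
  have hμabs : ‖μ‖ = 1 := by
    rw [hμdef, Complex.norm_exp_ofReal_mul_I]
  set lam : ℂ := ((1 + s : ℝ) : ℂ) * μ with hlamdef
  have hlam_abs : ‖lam‖ = 1 + s := by
    rw [hlamdef, norm_mul, hμabs, mul_one, Complex.norm_real,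
      Real.norm_of_nonneg (by linarith)]
  have hlam_gt : 1 < ‖lam‖ := by rw [hlam_abs]; linarith
  -- lower bound on |lam - 1|
  have him : (lam - 1).im = (1 + s) * Real.sin θ := by
    simp [hlamdef, hμdef, Complex.exp_ofReal_mul_I_re, Complex.exp_ofReal_mul_I_im]
  have hsin : |θ| / 2 ≤ |Real.sin θ| := aux_abs_sin_lb hθ hθ1
  have hlam_lb : |θ| / 2 ≤ ‖lam - 1‖ := by
    calc |θ| / 2 ≤ |Real.sin θ| := hsin
      _ ≤ (1 + s) * |Real.sin θ| := by nlinarith [abs_nonneg (Real.sin θ)]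
      _ = |(lam - 1).im| := by
            rw [him, abs_mul, abs_of_pos (show (0:ℝ) < 1 + s by linarith)]
      _ ≤ ‖lam - 1‖ := Complex.abs_im_le_norm _
      _ = ‖lam - 1‖ := rfl
  -- upper bound on |lam - 1|
  have hexp_sub : ‖μ - 1‖ ≤ 2 * |θ| := by
    have : ‖(θ : ℂ) * Complex.I‖ ≤ 1 := by
      rwa [norm_mul, Complex.norm_I, mul_one, Complex.norm_real, Real.norm_eq_abs]
    calc ‖μ - 1‖ = ‖Complex.exp (θ * Complex.I) - 1‖ := rfl
      _ ≤ 2 * ‖(θ : ℂ) * Complex.I‖ := Complex.norm_exp_sub_one_le this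
      _ = 2 * |θ| := by rw [norm_mul, Complex.norm_I, mul_one, Complex.norm_real, Real.norm_eq_abs]
  have hlam_sub_mu : ‖lam - μ‖ = s := by
    have : lam - μ = ((s : ℝ) : ℂ) * μ := by
      rw [hlamdef]; push_cast; ring
    rw [this, norm_mul, hμabs, mul_one, Complex.norm_real,
      Real.norm_of_nonneg hs_pos.le]
  have hlam_ub : ‖lam - 1‖ ≤ δ := by
    calc ‖lam - 1‖ ≤ ‖lam - μ‖ + ‖μ - 1‖ := by
          simpa using norm_sub_le_norm_sub_add_norm_sub lam μ 1
      _ ≤ s + 2 * |θ| := by rw [hlam_sub_mu]; linarith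
      _ ≤ |θ| / 2 + 2 * |θ| := by linarith
      _ ≤ 3 * (δ / 3) := by linarith
      _ = δ := by ring
  -- resolvent bound at lam
  have hres_lam : ‖resolvent T lam‖ ≤ K * |θ| ^ (-α) := by
    have h1 := hbound lam hlam_gt hlam_ub
    have h2 : ‖lam - 1‖ ^ (-α) ≤ (|θ| / 2) ^ (-α) :=
      Real.rpow_le_rpow_of_nonpos (by linarith) hlam_lb (by linarith)
    have h3 : (|θ| / 2) ^ (-α) = (2:ℝ) ^ α * |θ| ^ (-α) := by
      rw [Real.div_rpow (abs_nonneg θ) (by norm_num), Real.rpow_neg (by norm_num : (0:ℝ) ≤ 2)]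
      field_simp
    calc ‖resolvent T lam‖ ≤ C * ‖lam - 1‖ ^ (-α) := h1
      _ ≤ C₁ * ((|θ| / 2) ^ (-α)) := by
          have : C ≤ C₁ := le_max_left _ _
          have h0 : (0:ℝ) ≤ ‖lam - 1‖ ^ (-α) := Real.rpow_nonneg (norm_nonneg _) _
          nlinarith [Real.rpow_nonneg (by positivity : (0:ℝ) ≤ |θ| / 2) (-α)]
      _ = K * |θ| ^ (-α) := by rw [h3, hKdef]; ring
  -- lam is in the resolvent set
  have hlam_unit : IsUnit (algebraMap ℂ (X →L[ℂ] X) lam - T) := by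
    have : lam ∈ resolventSet ℂ T := by
      apply spectrum.mem_resolventSet_of_spectralRadius_lt
      refine lt_of_le_of_lt hr ?_
      rw [ENNReal.one_lt_coe_iff, ← NNReal.coe_lt_coe, coe_nnnorm, NNReal.coe_one]
      exact hlam_gt
    exact this
  obtain ⟨u, hu⟩ := hlam_unit
  have hRu : resolvent T lam = ↑u⁻¹ := by
    rw [resolvent, ← hu, Ring.inverse_unit]
  -- the perturbation
  set t : X →L[ℂ] X := (lam - μ) • resolvent T lam with htdef
  have ht_norm : ‖t‖ ≤ 1 / 2 := by
    calc ‖t‖ = ‖(lam - μ) • resolvent T lam‖ := by rw [htdef]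
      _ ≤ ‖lam - μ‖ * ‖resolvent T lam‖ := ContinuousLinearMap.opNorm_smul_le _ _
      _ ≤ s * (K * |θ| ^ (-α)) := by
          rw [hlam_sub_mu]; gcongr <;> try exact norm_nonneg _
      _ = (|θ| ^ α * |θ| ^ (-α)) / 2 := by rw [hsdef]; field_simp; try ring
      _ = 1 / 2 := by
          rw [← Real.rpow_add hθpos, add_neg_cancel, Real.rpow_zero]
  have ht_lt : ‖t‖ < 1 := lt_of_le_of_lt ht_norm (by norm_num)
  -- factorization:  μ - T = (lam - T)(1 - t)
  have hfact : algebraMap ℂ (X →L[ℂ] X) μ - T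
      = (algebraMap ℂ (X →L[ℂ] X) lam - T) * (1 - t) := by
    have huR : (algebraMap ℂ (X →L[ℂ] X) lam - T) * resolvent T lam = 1 := by
      rw [hRu, ← hu, ← Units.val_mul, mul_inv_cancel, Units.val_one]
    have hmaps : algebraMap ℂ (X →L[ℂ] X) μ - T
        = ((algebraMap ℂ (X →L[ℂ] X)) lam - T) - (lam - μ) • 1 := by
      rw [Algebra.algebraMap_eq_smul_one μ, Algebra.algebraMap_eq_smul_one lam, sub_smul]
      abel
    rw [htdef, mul_sub, mul_one, mul_smul_comm, huR, hmaps]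
  -- the unit for 1 - t and its norm bound
  set v : (X →L[ℂ] X)ˣ := Units.oneSub t ht_lt with hvdef
  have hv_inv_norm : ‖(↑v⁻¹ : X →L[ℂ] X)‖ ≤ 2 := by
    have hval : (↑v⁻¹ : X →L[ℂ] X) = ∑' n : ℕ, t ^ n := rfl
    rw [hval]
    have h1 : ‖(∑' n : ℕ, t ^ n)‖ ≤ ‖(1 : X →L[ℂ] X)‖ - 1 + (1 - ‖t‖)⁻¹ :=
      tsum_geometric_le_of_norm_lt_one t ht_lt
    have h2 : ‖(1 : X →L[ℂ] X)‖ ≤ 1 := ContinuousLinearMap.norm_id_le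
    have h3 : (1 - ‖t‖)⁻¹ ≤ 2 := by
      rw [inv_le_comm₀ (by linarith) two_pos]
      linarith
    linarith
  -- conclude
  have hmu_eq : algebraMap ℂ (X →L[ℂ] X) μ - T = ↑(u * v) := by
    rw [hfact, ← hu, Units.val_mul, hvdef, Units.val_oneSub]
  have hRmu : resolvent T μ = ↑(u * v)⁻¹ := by
    rw [resolvent, hmu_eq, Ring.inverse_unit]
  calc ‖resolvent T μ‖ = ‖(↑v⁻¹ : X →L[ℂ] X) * ↑u⁻¹‖ := by
        rw [hRmu, mul_inv_rev, Units.val_mul]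
    _ ≤ ‖(↑v⁻¹ : X →L[ℂ] X)‖ * ‖(↑u⁻¹ : X →L[ℂ] X)‖ := norm_mul_le _ _
    _ ≤ 2 * (K * |θ| ^ (-α)) := by
        rw [← hRu]
        gcongr <;> try exact norm_nonneg _
    _ = 2 * K * |θ| ^ (-α) := by ring
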